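/- arXiv:2407.20403 — 4 statements merged into one kernel-verified Lean document; each statement's English description precedes it below -/
import Mathlib

section
/- Fix x with 0 < x < r and f analytic on D_r. The function α ↦ Σ_{n=0}^∞ f_n x^n/(n+α) (the Hadamard finite part of ∫₀ˣ t^{α-1} f(t) dt with the factor x^α removed) is meromorphic in α on ℂ with at most simple poles at α = 0, -1, -2, ..., the pole at α = -k having residue f_k. -/
open Complex Filter

/-- For fixed `0 < x < r` and `f` analytic on `D_r` with Maclaurin coefficients `c n`,
the Hadamard finite part `α ↦ Σ c n * x^{n+α} / (n+α)` of `∫₀ˣ t^{α-1} f(t) dt` is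
meromorphic in `α`: analytic away from `α = 0, -1, -2, ...`, with at most simple poles
there, the pole at `α = -k` having residue `c k`. -/
theorem hadamard_finite_part_meromorphic (r x : ℝ) (hx : 0 < x) (hxr : x < r)
    (f : ℂ → ℂ) (c : ℕ → ℂ)
    (hf : AnalyticOnNhd ℂ f (Metric.ball (0 : ℂ) r))
    (hc : ∀ z ∈ Metric.ball (0 : ℂ) r, HasSum (fun n : ℕ => c n * z ^ n) (f z)) :
    (∀ α : ℂ, (∀ n : ℕ, α ≠ -(n : ℂ)) →
        AnalyticAt ℂ
          (fun β : ℂ => ∑' n : ℕ, c n * (x : ℂ) ^ ((n : ℂ) + β) / ((n : ℂ) + β)) α) ∧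
      (∀ k : ℕ,
        Tendsto
          (fun β : ℂ =>
            (β + (k : ℂ)) * ∑' n : ℕ, c n * (x : ℂ) ^ ((n : ℂ) + β) / ((n : ℂ) + β))
          (nhdsWithin (-(k : ℂ)) {(-(k : ℂ))}ᶜ) (nhds (c k))) := by
  classical
  have hx0 : (x : ℂ) ≠ 0 := Complex.ofReal_ne_zero.mpr hx.ne'
  obtain ⟨ρ, hρx, hρr⟩ : ∃ ρ : ℝ, x < ρ ∧ ρ < r :=
    ⟨(x + r) / 2, by linarith, by linarith⟩
  have hρ0 : 0 < ρ := lt_trans hx hρx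
  have hmem : (ρ : ℂ) ∈ Metric.ball (0 : ℂ) r := by
    simp [Complex.dist_eq, Complex.norm_real, abs_of_pos hρ0, hρr]
  have hsum : Summable fun n : ℕ => c n * (ρ : ℂ) ^ n := (hc _ hmem).summable
  have hnorm : Tendsto (fun n : ℕ => ‖c n‖ * ρ ^ n) atTop (nhds 0) := by
    have h := hsum.tendsto_atTop_zero.norm
    simp only [norm_mul, norm_pow, Complex.norm_real, Real.norm_eq_abs,
      abs_of_pos hρ0, norm_zero] at h
    exact h
  obtain ⟨C, hCub⟩ := hnorm.bddAbove_range
  have hC : ∀ n, ‖c n‖ * ρ ^ n ≤ C := fun n => hCub ⟨n, rfl⟩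
  have hC0 : 0 ≤ C := le_trans (by positivity) (hC 0)
  -- the key uniform bound
  have key : ∀ (α : ℂ) (δ : ℝ), 0 < δ →
      ∃ u : ℕ → ℝ, Summable u ∧ (∀ n, 0 ≤ u n) ∧
        ∀ (n : ℕ) (β : ℂ), β ∈ Metric.ball α δ → δ ≤ ‖(n : ℂ) + β‖ →
          ‖c n * (x : ℂ) ^ ((n : ℂ) + β) / ((n : ℂ) + β)‖ ≤ u n := by
    intro α δ hδ
    set B : ℝ := Real.exp ((|α.re| + δ) * |Real.log x|) with hBdef
    have hB0 : 0 < B := Real.exp_pos _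
    refine ⟨fun n => (C * B / δ) * (x / ρ) ^ n, ?_, ?_, ?_⟩
    · exact (summable_geometric_of_lt_one (by positivity)
        (by rw [div_lt_one hρ0]; exact hρx)).mul_left _
    · intro n; positivity
    · intro n β hβ hnβ
      have h1 : ‖(x : ℂ) ^ ((n : ℂ) + β)‖ = x ^ (((n : ℂ) + β).re) := by
        rw [Complex.norm_cpow_eq_rpow_re_of_pos hx]
      have h2 : (((n : ℂ) + β).re) = (n : ℝ) + β.re := by simp
      have h3 : x ^ ((n : ℝ) + β.re) = x ^ (n : ℕ) * x ^ β.re := by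
        rw [Real.rpow_add hx, Real.rpow_natCast]
      have hβα : ‖β - α‖ < δ := by rwa [Metric.mem_ball, dist_eq_norm] at hβ
      have hre : |β.re| ≤ |α.re| + δ := by
        have h4 : |β.re - α.re| ≤ ‖β - α‖ := by
          have := Complex.abs_re_le_norm (β - α)
          simpa [Complex.sub_re] using this
        have h5 : |β.re| ≤ |α.re| + |β.re - α.re| := by
          have := abs_add_le α.re (β.re - α.re)
          simpa using this
        linarith
      have hBle : x ^ β.re ≤ B := by
        rw [Real.rpow_def_of_pos hx, hBdef]
        apply Real.exp_le_exp.mpr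
        calc Real.log x * β.re ≤ |Real.log x * β.re| := le_abs_self _
          _ = |Real.log x| * |β.re| := abs_mul _ _
          _ ≤ |Real.log x| * (|α.re| + δ) := by
              apply mul_le_mul_of_nonneg_left hre (abs_nonneg _)
          _ = (|α.re| + δ) * |Real.log x| := mul_comm _ _
      have hcn : ‖c n‖ * x ^ n ≤ C * (x / ρ) ^ n := by
        have h6 : ‖c n‖ * x ^ n = (‖c n‖ * ρ ^ n) * (x / ρ) ^ n := by
          rw [div_pow]; field_simp
        rw [h6, div_pow]
        apply mul_le_mul_of_nonneg_right (hC n) (by positivity)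
      have hx0' : (0:ℝ) ≤ x ^ β.re := Real.rpow_nonneg hx.le _
      rw [norm_div, norm_mul, h1, h2, h3]
      calc ‖c n‖ * (x ^ n * x ^ β.re) / ‖(n : ℂ) + β‖
          ≤ ‖c n‖ * (x ^ n * B) / δ := by
            apply div_le_div₀ (by positivity) ?_ hδ hnβ
            apply mul_le_mul_of_nonneg_left ?_ (norm_nonneg _)
            exact mul_le_mul_of_nonneg_left hBle (by positivity)
        _ = (‖c n‖ * x ^ n) * B / δ := by ring
        _ ≤ (C * (x / ρ) ^ n) * B / δ := by gcongr
        _ = (C * B / δ) * (x / ρ) ^ n := by ring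
  constructor
  · -- analyticity away from the poles
    intro α hα
    have hα' : ∀ n : ℕ, (n : ℂ) + α ≠ 0 := fun n h =>
      hα n (by linear_combination h)
    set N : ℕ := ⌈‖α‖⌉₊ + 2 with hN
    have hNne : (Finset.range N).Nonempty := ⟨0, by simp [hN]⟩
    set d : ℝ := (Finset.range N).inf' hNne (fun n => ‖(n : ℂ) + α‖) with hd
    have hd0 : 0 < d := by
      rw [hd, Finset.lt_inf'_iff]
      exact fun n _ => norm_pos_iff.mpr (hα' n)
    set δ : ℝ := min (d / 2) 2⁻¹ with hδdef
    have hδ0 : 0 < δ := lt_min (by linarith) (by norm_num)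
    have hlow : ∀ (n : ℕ) (β : ℂ), β ∈ Metric.ball α δ → δ ≤ ‖(n : ℂ) + β‖ := by
      intro n β hβ
      have hβα : ‖β - α‖ < δ := by rwa [Metric.mem_ball, dist_eq_norm] at hβ
      rcases lt_or_ge n N with hn | hn
      · have h1 : d ≤ ‖(n : ℂ) + α‖ :=
          Finset.inf'_le _ (Finset.mem_range.mpr hn)
        have h2 : ‖(n : ℂ) + α‖ - ‖(n : ℂ) + β‖ ≤ ‖α - β‖ := by
          have := norm_sub_norm_le ((n : ℂ) + α) ((n : ℂ) + β)
          simpa [add_sub_add_left_eq_sub] using this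
        have h3 : ‖α - β‖ = ‖β - α‖ := norm_sub_rev _ _
        have hδd : δ ≤ d / 2 := min_le_left _ _
        linarith
      · have h1 : (N : ℝ) ≤ n := by exact_mod_cast hn
        have h2 : ‖α‖ + 2 ≤ (N : ℝ) := by
          have := Nat.le_ceil ‖α‖
          rw [hN]; push_cast; linarith
        have h3 : ‖β‖ ≤ ‖α‖ + δ := by
          calc ‖β‖ = ‖α + (β - α)‖ := by ring_nf
            _ ≤ ‖α‖ + ‖β - α‖ := norm_add_le _ _
            _ ≤ ‖α‖ + δ := by linarith
        have h4 : (n : ℝ) ≤ ‖(n : ℂ) + β‖ + ‖β‖ := by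
          have h5 : ‖(n : ℂ)‖ ≤ ‖(n : ℂ) + β‖ + ‖β‖ := by
            calc ‖(n : ℂ)‖ = ‖((n : ℂ) + β) + (-β)‖ := by ring_nf
              _ ≤ ‖(n : ℂ) + β‖ + ‖-β‖ := norm_add_le _ _
              _ = ‖(n : ℂ) + β‖ + ‖β‖ := by rw [norm_neg]
          simpa [Complex.norm_natCast] using h5
        have hδhalf : δ ≤ 2⁻¹ := min_le_right _ _
        linarith
    obtain ⟨u, hu, hu0, hub⟩ := key α δ hδ0
    have hdiff : DifferentiableOn ℂ
        (fun β : ℂ => ∑' n : ℕ, c n * (x : ℂ) ^ ((n : ℂ) + β) / ((n : ℂ) + β))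
        (Metric.ball α δ) := by
      apply differentiableOn_tsum_of_summable_norm hu ?_ Metric.isOpen_ball
        (fun n β hβ => hub n β hβ (hlow n β hβ))
      intro n β hβ
      apply DifferentiableAt.differentiableWithinAt
      have hne : (n : ℂ) + β ≠ 0 := by
        intro h
        have := hlow n β hβ
        rw [h, norm_zero] at this
        linarith
      exact ((differentiableAt_const (c n)).mul
        (DifferentiableAt.const_cpow (differentiableAt_id.const_add _)
          (Or.inl hx0))).div (differentiableAt_id.const_add _) hne
    exact hdiff.analyticAt (Metric.isOpen_ball.mem_nhds (Metric.mem_ball_self hδ0))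
  · -- the residue computation
    intro k
    obtain ⟨u, hu, hu0, hub⟩ := key (-(k : ℂ)) 2⁻¹ (by norm_num)
    have hlow : ∀ (n : ℕ) (β : ℂ), β ∈ Metric.ball (-(k : ℂ)) 2⁻¹ → n ≠ k →
        (2⁻¹ : ℝ) ≤ ‖(n : ℂ) + β‖ := by
      intro n β hβ hnk
      have h1 : (1 : ℝ) ≤ |(n : ℝ) - k| := by
        have h : ((n : ℤ) - k) ≠ 0 := sub_ne_zero.mpr (by exact_mod_cast hnk)
        have := Int.one_le_abs h
        exact_mod_cast this
      have h2 : ‖β + (k : ℂ)‖ < 2⁻¹ := by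
        rw [Metric.mem_ball, dist_eq_norm] at hβ
        simpa [sub_neg_eq_add] using hβ
      have h5 : ‖(n : ℂ) - k‖ = |(n : ℝ) - k| := by
        rw [show (n : ℂ) - (k : ℂ) = (((n : ℝ) - k : ℝ) : ℂ) by push_cast; ring,
          Complex.norm_real, Real.norm_eq_abs]
      have h4 : ‖(n : ℂ) - k‖ - ‖β + k‖ ≤ ‖(n : ℂ) + β‖ := by
        have h6 := norm_sub_le ((n : ℂ) + β) (β + k)
        have h7 : ((n : ℂ) + β) - (β + k) = (n : ℂ) - k := by ring
        rw [h7] at h6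
        linarith
      linarith
    -- summability for β in the ball
    have hsummite : ∀ β ∈ Metric.ball (-(k : ℂ)) 2⁻¹,
        Summable (fun n : ℕ => if n = k then 0 else
          c n * (x : ℂ) ^ ((n : ℂ) + β) / ((n : ℂ) + β)) := by
      intro β hβ
      apply Summable.of_norm_bounded hu
      intro n
      by_cases hn : n = k
      · simp [hn, hu0 k]
      · simp only [hn, if_neg, if_false]
        exact hub n β hβ (hlow n β hβ hn)
    have hsumm : ∀ β ∈ Metric.ball (-(k : ℂ)) 2⁻¹,
        Summable (fun n : ℕ => c n * (x : ℂ) ^ ((n : ℂ) + β) / ((n : ℂ) + β)) := by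
      intro β hβ
      have heq : (fun n : ℕ => c n * (x : ℂ) ^ ((n : ℂ) + β) / ((n : ℂ) + β)) =
          (fun n : ℕ => (if n = k then 0 else
            c n * (x : ℂ) ^ ((n : ℂ) + β) / ((n : ℂ) + β)) +
          (if n = k then c n * (x : ℂ) ^ ((n : ℂ) + β) / ((n : ℂ) + β) else 0)) := by
        funext n
        by_cases hn : n = k <;> simp [hn]
      rw [heq]
      apply (hsummite β hβ).add
      apply summable_of_ne_finset_zero (s := {k})
      intro n hn
      simp only [Finset.mem_singleton] at hn
      simp [hn]
    have hball : ∀ᶠ β in nhdsWithin (-(k : ℂ)) {(-(k : ℂ))}ᶜ,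
        β ∈ Metric.ball (-(k : ℂ)) 2⁻¹ :=
      eventually_nhdsWithin_of_eventually_nhds
        (Metric.isOpen_ball.eventually_mem (Metric.mem_ball_self (by norm_num)))
    have hev : ∀ᶠ β in nhdsWithin (-(k : ℂ)) {(-(k : ℂ))}ᶜ,
        (β + (k : ℂ)) * ∑' n : ℕ, c n * (x : ℂ) ^ ((n : ℂ) + β) / ((n : ℂ) + β) =
        c k * (x : ℂ) ^ ((k : ℂ) + β) +
          (β + (k : ℂ)) * ∑' n : ℕ, (if n = k then 0 else
            c n * (x : ℂ) ^ ((n : ℂ) + β) / ((n : ℂ) + β)) := by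
      filter_upwards [hball, self_mem_nhdsWithin] with β hβ hβne
      have hkβ : (k : ℂ) + β ≠ 0 := by
        intro h
        apply hβne
        simp only [Set.mem_compl_iff, Set.mem_singleton_iff, not_not]
        linear_combination h
      rw [Summable.tsum_eq_add_tsum_ite (hsumm β hβ) k, mul_add]
      congr 1
      field_simp
      ring
    have hA : Tendsto (fun β : ℂ => c k * (x : ℂ) ^ ((k : ℂ) + β))
        (nhdsWithin (-(k : ℂ)) {(-(k : ℂ))}ᶜ) (nhds (c k)) := by
      have hcont : ContinuousAt (fun β : ℂ => c k * (x : ℂ) ^ ((k : ℂ) + β))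
          (-(k : ℂ)) := by
        apply ContinuousAt.mul continuousAt_const
        exact (DifferentiableAt.const_cpow (differentiableAt_id.const_add _)
          (Or.inl hx0)).continuousAt
      have hval : c k * (x : ℂ) ^ ((k : ℂ) + (-(k : ℂ))) = c k := by
        rw [show (k : ℂ) + (-(k : ℂ)) = 0 by ring, Complex.cpow_zero, mul_one]
      have htd : Tendsto (fun β : ℂ => c k * (x : ℂ) ^ ((k : ℂ) + β))
          (nhdsWithin (-(k : ℂ)) {(-(k : ℂ))}ᶜ)
          (nhds (c k * (x : ℂ) ^ ((k : ℂ) + (-(k : ℂ))))) :=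
        hcont.tendsto.mono_left nhdsWithin_le_nhds
      rwa [hval] at htd
    have hB : Tendsto (fun β : ℂ => (β + (k : ℂ)) * ∑' n : ℕ, (if n = k then 0 else
          c n * (x : ℂ) ^ ((n : ℂ) + β) / ((n : ℂ) + β)))
        (nhdsWithin (-(k : ℂ)) {(-(k : ℂ))}ᶜ) (nhds 0) := by
      set U : ℝ := ∑' n, u n with hU
      apply squeeze_zero_norm' (a := fun β : ℂ => ‖β + (k : ℂ)‖ * U)
      · filter_upwards [hball] with β hβ
        rw [norm_mul]
        apply mul_le_mul_of_nonneg_left ?_ (norm_nonneg _)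
        calc ‖∑' n : ℕ, (if n = k then 0 else
              c n * (x : ℂ) ^ ((n : ℂ) + β) / ((n : ℂ) + β))‖
            ≤ ∑' n : ℕ, ‖(if n = k then 0 else
              c n * (x : ℂ) ^ ((n : ℂ) + β) / ((n : ℂ) + β))‖ :=
              norm_tsum_le_tsum_norm ((hsummite β hβ).norm)
          _ ≤ ∑' n, u n := by
              apply Summable.tsum_le_tsum ?_ ((hsummite β hβ).norm) hu
              intro n
              by_cases hn : n = k
              · simp [hn, hu0 k]
              · simp only [hn, if_neg, if_false]
                exact hub n β hβ (hlow n β hβ hn)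
      · have h0 : Tendsto (fun β : ℂ => ‖β + (k : ℂ)‖)
            (nhdsWithin (-(k : ℂ)) {(-(k : ℂ))}ᶜ) (nhds 0) := by
          have : ContinuousAt (fun β : ℂ => ‖β + (k : ℂ)‖) (-(k : ℂ)) :=
            (continuous_norm.comp (continuous_id.add continuous_const)).continuousAt
          have h1 : Tendsto (fun β : ℂ => ‖β + (k : ℂ)‖)
              (nhdsWithin (-(k : ℂ)) {(-(k : ℂ))}ᶜ) (nhds ‖(-(k : ℂ)) + (k : ℂ)‖) :=
            this.tendsto.mono_left nhdsWithin_le_nhds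
          simpa using h1
        have := h0.mul_const U
        simpa using this
    have := hA.add hB
    rw [add_zero] at this
    exact Tendsto.congr' (hev.mono fun β h => h.symm) this
end

section
/- Let φ be analytic on [0,∞) such that ∫_R^∞ p^{Re α - 1}|φ(p)| dp converges for every R > 0 and every α ∈ ℂ. Then for each k = 0,1,2,..., one has lim_{ε→0} ε · FP∫₀^∞ p^{-k-1+ε} φ(p) dp = φ^{(k)}(0)/k!, where FP denotes the Hadamard finite part of the integral near 0 (the integral from R to ∞ being an ordinary convergent integral). -/
open Complex Filter MeasureTheory

lemma rpow_le_add_rpow {p s ε : ℝ} (hp : 0 < p) (hε : |ε| ≤ s) :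
    p ^ ε ≤ p ^ (-s) + p ^ s := by
  obtain ⟨h1, h2⟩ := abs_le.mp hε
  rcases le_total p 1 with hp1 | hp1
  · have : p ^ ε ≤ p ^ (-s) := Real.rpow_le_rpow_of_exponent_ge hp hp1 h1
    linarith [Real.rpow_nonneg hp.le s]
  · have : p ^ ε ≤ p ^ s := Real.rpow_le_rpow_of_exponent_le hp1 h2
    linarith [Real.rpow_nonneg hp.le (-s)]


lemma coeff_ident (φ ψ : ℝ → ℂ) (k : ℕ) (a : ℕ → ℂ)
    (ps : FormalMultilinearSeries ℝ ℝ ℂ) (hps : HasFPowerSeriesAt φ ps 0)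
    (hψc : ContinuousAt ψ 0)
    (hdecomp : ∀ p : ℝ, 0 ≤ p →
      φ p = (∑ n ∈ Finset.range (k + 1), a n * (p : ℂ) ^ n) + (p : ℂ) ^ (k + 1) * ψ p) :
    ∀ m, m ≤ k → ps.coeff m = a m := by
  intro m
  induction m using Nat.strong_induction_on with
  | _ m IH =>
  intro hmk
  have hcoer : Tendsto (fun p : ℝ => (p : ℂ)) (nhdsWithin 0 (Set.Ioi 0)) (nhds 0) :=
    (Complex.continuous_ofReal.tendsto' 0 0 rfl).mono_left nhdsWithin_le_nhds
  -- L2 : power series side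
  have L2 : Tendsto (fun p : ℝ =>
      (φ p - ∑ n ∈ Finset.range (m + 1), ps.coeff n * (p : ℂ) ^ n) / (p : ℂ) ^ m)
      (nhdsWithin 0 (Set.Ioi 0)) (nhds 0) := by
    obtain ⟨C, hC⟩ := (hps.isBigO_sub_partialSum_pow (m + 1)).bound
    refine squeeze_zero_norm' (a := fun p : ℝ => C * p) ?_ ?_
    · filter_upwards [nhdsWithin_le_nhds hC, self_mem_nhdsWithin] with p hp hp0
      have hp0 : (0:ℝ) < p := hp0
      have hpsum : ps.partialSum (m + 1) p
          = ∑ n ∈ Finset.range (m + 1), ps.coeff n * (p : ℂ) ^ n := by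
        unfold FormalMultilinearSeries.partialSum
        refine Finset.sum_congr rfl fun n _ => ?_
        rw [FormalMultilinearSeries.apply_eq_pow_smul_coeff]
        simp [Complex.real_smul, mul_comm]
      rw [zero_add, hpsum] at hp
      rw [norm_div, norm_pow, Complex.norm_real, Real.norm_eq_abs, abs_of_pos hp0]
      rw [div_le_iff₀ (by positivity)]
      calc ‖φ p - ∑ n ∈ Finset.range (m + 1), ps.coeff n * (p : ℂ) ^ n‖
          ≤ C * ‖‖p‖ ^ (m+1)‖ := hp
        _ = C * p ^ (m+1) := by
            rw [Real.norm_eq_abs, Real.norm_eq_abs, abs_of_pos hp0,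
              abs_of_pos (by positivity)]
        _ = C * p * p ^ m := by ring
    · have h : Tendsto (fun p : ℝ => C * p) (nhds 0) (nhds (C * 0)) :=
        tendsto_id.const_mul C
      rw [mul_zero] at h
      exact h.mono_left nhdsWithin_le_nhds
  -- L1 : decomposition side
  have L1 : Tendsto (fun p : ℝ =>
      (φ p - ∑ n ∈ Finset.range (m + 1), a n * (p : ℂ) ^ n) / (p : ℂ) ^ m)
      (nhdsWithin 0 (Set.Ioi 0)) (nhds 0) := by
    have heq : ∀ p ∈ Set.Ioi (0:ℝ),
        (∑ n ∈ Finset.Ico (m + 1) (k + 1), a n * (p : ℂ) ^ (n - m))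
          + (p : ℂ) ^ (k + 1 - m) * ψ p
          = (φ p - ∑ n ∈ Finset.range (m + 1), a n * (p : ℂ) ^ n) / (p : ℂ) ^ m := by
      intro p hp
      have hp0 : (0:ℝ) < p := hp
      have hpne : (p : ℂ) ≠ 0 := by exact_mod_cast hp0.ne'
      have hsplit : (∑ n ∈ Finset.range (k + 1), a n * (p : ℂ) ^ n)
          = (∑ n ∈ Finset.range (m + 1), a n * (p : ℂ) ^ n)
            + ∑ n ∈ Finset.Ico (m + 1) (k + 1), a n * (p : ℂ) ^ n := by
        simp only [Finset.range_eq_Ico]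
        exact (Finset.sum_Ico_consecutive _ (by omega) (by omega)).symm
      rw [hdecomp p hp0.le, hsplit]
      rw [show (∑ n ∈ Finset.range (m + 1), a n * (p : ℂ) ^ n)
            + (∑ n ∈ Finset.Ico (m + 1) (k + 1), a n * (p : ℂ) ^ n)
            + (p : ℂ) ^ (k + 1) * ψ p
            - ∑ n ∈ Finset.range (m + 1), a n * (p : ℂ) ^ n
          = (∑ n ∈ Finset.Ico (m + 1) (k + 1), a n * (p : ℂ) ^ n)
            + (p : ℂ) ^ (k + 1) * ψ p by ring]
      rw [add_div, Finset.sum_div]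
      congr 1
      · refine Finset.sum_congr rfl fun n hn => ?_
        have hmn : m ≤ n := by have := (Finset.mem_Ico.mp hn).1; omega
        rw [mul_div_assoc, div_eq_mul_inv, ← pow_sub₀ _ hpne hmn]
      · rw [mul_comm ((p:ℂ) ^ (k+1)) (ψ p), mul_div_assoc, div_eq_mul_inv,
          ← pow_sub₀ _ hpne (by omega), mul_comm]
    have h1 : Tendsto (fun p : ℝ =>
        ∑ n ∈ Finset.Ico (m + 1) (k + 1), a n * (p : ℂ) ^ (n - m))
        (nhdsWithin 0 (Set.Ioi 0))
        (nhds (∑ n ∈ Finset.Ico (m + 1) (k + 1), a n * (0:ℂ) ^ (n - m))) :=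
      tendsto_finset_sum _ fun n _ => tendsto_const_nhds.mul (hcoer.pow _)
    have h2 : Tendsto (fun p : ℝ => (p : ℂ) ^ (k + 1 - m) * ψ p)
        (nhdsWithin 0 (Set.Ioi 0)) (nhds ((0:ℂ) ^ (k + 1 - m) * ψ 0)) :=
      (hcoer.pow _).mul (hψc.tendsto.comp
        ((continuous_id.tendsto 0).mono_left nhdsWithin_le_nhds))
    have hlim := h1.add h2
    rw [Finset.sum_eq_zero (fun n hn => by
        have : m + 1 ≤ n := (Finset.mem_Ico.mp hn).1
        rw [zero_pow (by omega : n - m ≠ 0), mul_zero]),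
      zero_pow (by omega : k + 1 - m ≠ 0), zero_mul, add_zero] at hlim
    exact hlim.congr' (eventuallyEq_nhdsWithin_of_eqOn heq)
  -- subtract
  have hsub := L2.sub L1
  rw [sub_zero] at hsub
  have heq2 : ∀ p ∈ Set.Ioi (0:ℝ),
      (φ p - ∑ n ∈ Finset.range (m + 1), ps.coeff n * (p : ℂ) ^ n) / (p : ℂ) ^ m
        - (φ p - ∑ n ∈ Finset.range (m + 1), a n * (p : ℂ) ^ n) / (p : ℂ) ^ m
      = a m - ps.coeff m := by
    intro p hp
    have hp0 : (0:ℝ) < p := hp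
    have hpne : (p : ℂ) ≠ 0 := by exact_mod_cast hp0.ne'
    have hs : ∑ n ∈ Finset.range (m+1), (a n - ps.coeff n) * (p:ℂ) ^ n
        = (∑ n ∈ Finset.range (m+1), a n * (p:ℂ) ^ n)
          - ∑ n ∈ Finset.range (m+1), ps.coeff n * (p:ℂ) ^ n := by
      rw [← Finset.sum_sub_distrib]
      exact Finset.sum_congr rfl fun n _ => by ring
    rw [div_sub_div_same,
      show (φ p - ∑ n ∈ Finset.range (m + 1), ps.coeff n * (p : ℂ) ^ n)
          - (φ p - ∑ n ∈ Finset.range (m + 1), a n * (p : ℂ) ^ n)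
        = (∑ n ∈ Finset.range (m+1), a n * (p:ℂ) ^ n)
          - ∑ n ∈ Finset.range (m+1), ps.coeff n * (p:ℂ) ^ n by ring,
      ← hs, Finset.sum_range_succ, Finset.sum_eq_zero, zero_add]
    · exact mul_div_cancel_right₀ _ (pow_ne_zero _ hpne)
    · intro n hn
      rw [IH n (Finset.mem_range.mp hn) (((Finset.mem_range.mp hn).le).trans hmk), sub_self, zero_mul]
  have hfin := tendsto_nhds_unique
    (hsub.congr' (eventuallyEq_nhdsWithin_of_eqOn heq2)) tendsto_const_nhds
  -- hfin : (0 : ℂ) = a m - ps.coeff m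
  have := sub_eq_zero.mp hfin.symm
  linear_combination -this

/-- Lemma 1.4(A): for `φ` analytic on `[0,∞)` with `∫_R^∞ p^{Re α - 1}|φ(p)| dp < ∞`
for all `R > 0` and all `α`, and for each `k = 0,1,2,...`,
`lim_{ε→0} ε · FP∫₀^∞ p^{-k-1+ε} φ(p) dp = φ^{(k)}(0)/k!`.
The Hadamard finite part is expressed via the decomposition
`φ(p) = Σ_{n≤k} a n p^n + p^{k+1} ψ(p)`: it replaces each divergent
`∫₀^R p^{n-k-1+ε} dp` by `R^{n-k+ε}/(n-k+ε)`. -/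
theorem hadamard_finite_part_limit (φ ψ : ℝ → ℂ) (k : ℕ) (a : ℕ → ℂ) (R : ℝ) (hR : 0 < R)
    (hφ : AnalyticOnNhd ℝ φ (Set.Ici 0)) (hψ : AnalyticOnNhd ℝ ψ (Set.Ici 0))
    (hdecomp : ∀ p : ℝ, 0 ≤ p →
      φ p = (∑ n ∈ Finset.range (k + 1), a n * (p : ℂ) ^ n) + (p : ℂ) ^ (k + 1) * ψ p)
    (hint : ∀ S : ℝ, 0 < S → ∀ α : ℝ,
      IntegrableOn (fun p : ℝ => p ^ (α - 1) * ‖φ p‖) (Set.Ioi S)) :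
    Tendsto
      (fun ε : ℝ =>
        (ε : ℂ) *
          ((∑ n ∈ Finset.range (k + 1),
              a n * ((R ^ ((n : ℝ) - k + ε) : ℝ) : ℂ) / ((n : ℂ) - (k : ℂ) + (ε : ℂ)))
            + (∫ p in (0 : ℝ)..R, ((p ^ ε : ℝ) : ℂ) * ψ p)
            + ∫ p in Set.Ioi R, ((p ^ (-(k : ℝ) - 1 + ε) : ℝ) : ℂ) * φ p))
      (nhdsWithin 0 {(0 : ℝ)}ᶜ)
      (nhds (iteratedDeriv k φ 0 / (Nat.factorial k : ℂ))) := by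
  have hR0 : (0:ℝ) ≤ R := hR.le
  set l := nhdsWithin (0:ℝ) {(0:ℝ)}ᶜ with hl
  obtain ⟨ps, hps⟩ := hφ 0 Set.self_mem_Ici
  -- the value of the limit is `a k`
  have hval : iteratedDeriv k φ 0 / (Nat.factorial k : ℂ) = a k := by
    have h1 : iteratedDeriv k φ 0 = (k.factorial : ℂ) * ps.coeff k := by
      obtain ⟨r, hball⟩ := hps
      have h := hball.factorial_smul (1 : ℝ) k
      rw [iteratedDeriv_eq_iteratedFDeriv, ← h,
        FormalMultilinearSeries.apply_eq_pow_smul_coeff]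
      simp [nsmul_eq_mul]
    have h2 := coeff_ident φ ψ k a ps hps
      ((hψ 0 Set.self_mem_Ici).continuousAt) hdecomp k le_rfl
    rw [h1, h2, mul_comm, mul_div_assoc, div_self, mul_one]
    exact_mod_cast k.factorial_ne_zero
  rw [hval]
  -- basic tendsto facts
  have hεc : Tendsto (fun ε : ℝ => (ε : ℂ)) l (nhds 0) :=
    (Complex.continuous_ofReal.tendsto' 0 0 rfl).mono_left nhdsWithin_le_nhds
  have hRpow : ∀ x : ℝ, Tendsto (fun ε : ℝ => ((R ^ (x + ε) : ℝ) : ℂ)) l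
      (nhds ((R ^ x : ℝ) : ℂ)) := by
    intro x
    have hc : ContinuousAt (fun y : ℝ => R ^ y) x := Real.continuousAt_const_rpow hR.ne'
    have hx : Tendsto (fun ε : ℝ => x + ε) (nhds 0) (nhds x) := by
      have : Tendsto (fun ε : ℝ => x + ε) (nhds 0) (nhds (x + 0)) :=
        tendsto_const_nhds.add tendsto_id
      simpa using this
    exact ((Complex.continuous_ofReal.tendsto _).comp (hc.tendsto.comp hx)).mono_left
      nhdsWithin_le_nhds
  -- the sum term
  have h1a : Tendsto (fun ε : ℝ => ∑ n ∈ Finset.range k,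
      (ε : ℂ) * (a n * ((R ^ ((n : ℝ) - k + ε) : ℝ) : ℂ) / ((n : ℂ) - (k : ℂ) + (ε : ℂ))))
      l (nhds 0) := by
    have : Tendsto (fun ε : ℝ => ∑ n ∈ Finset.range k,
        (ε : ℂ) * (a n * ((R ^ ((n : ℝ) - k + ε) : ℝ) : ℂ) / ((n : ℂ) - (k : ℂ) + (ε : ℂ))))
        l (nhds (∑ n ∈ Finset.range k, (0 : ℂ) *
          (a n * ((R ^ ((n : ℝ) - k) : ℝ) : ℂ) / ((n : ℂ) - (k : ℂ))))) := by
      refine tendsto_finset_sum _ fun n hn => ?_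
      have hnk : n < k := Finset.mem_range.mp hn
      have hne : (n : ℂ) - (k : ℂ) ≠ 0 := by
        rw [sub_ne_zero]
        exact_mod_cast hnk.ne
      have hD : Tendsto (fun ε : ℝ => (n : ℂ) - (k : ℂ) + (ε : ℂ)) l
          (nhds ((n : ℂ) - (k : ℂ))) := by
        have hcst : Tendsto (fun _ : ℝ => (n : ℂ) - (k : ℂ)) l (nhds ((n : ℂ) - (k : ℂ))) :=
          tendsto_const_nhds
        simpa using hcst.add hεc
      exact hεc.mul ((tendsto_const_nhds.mul (hRpow ((n : ℝ) - k))).div hD hne)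
    simpa using this
  have h1b : Tendsto (fun ε : ℝ =>
      (ε : ℂ) * (a k * ((R ^ ((k : ℝ) - k + ε) : ℝ) : ℂ) / ((k : ℂ) - (k : ℂ) + (ε : ℂ))))
      l (nhds (a k)) := by
    have hgt : Tendsto (fun ε : ℝ => a k * ((R ^ ((k : ℝ) - k + ε) : ℝ) : ℂ)) l
        (nhds (a k)) := by
      have hcst : Tendsto (fun _ : ℝ => a k) l (nhds (a k)) := tendsto_const_nhds
      have := hcst.mul (hRpow ((k : ℝ) - k))
      simpa using this
    refine hgt.congr' ?_
    filter_upwards [self_mem_nhdsWithin] with ε hε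
    have hεne : (ε : ℂ) ≠ 0 := Complex.ofReal_ne_zero.mpr hε
    simp only [sub_self, zero_add]
    rw [mul_comm ((ε : ℂ)), div_mul_cancel₀ _ hεne]
  have hsum : Tendsto (fun ε : ℝ => (ε : ℂ) * ∑ n ∈ Finset.range (k + 1),
      a n * ((R ^ ((n : ℝ) - k + ε) : ℝ) : ℂ) / ((n : ℂ) - (k : ℂ) + (ε : ℂ)))
      l (nhds (a k)) := by
    have := h1a.add h1b
    rw [zero_add] at this
    refine this.congr fun ε => ?_
    rw [Finset.sum_range_succ, mul_add, Finset.mul_sum]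
  -- interval integral term
  have hψcont : ContinuousOn ψ (Set.Icc 0 R) := fun p hp =>
    ((hψ p hp.1).continuousAt).continuousWithinAt
  obtain ⟨M, hM⟩ := isCompact_Icc.exists_bound_of_continuousOn hψcont
  have hM0 : 0 ≤ M := le_trans (norm_nonneg _) (hM 0 ⟨le_rfl, hR0⟩)
  have hg1int : IntegrableOn (fun p : ℝ => (p ^ (-(2⁻¹:ℝ)) + p ^ (2⁻¹:ℝ)) * M)
      (Set.Ioc 0 R) := by
    have i1 : IntervalIntegrable (fun p : ℝ => p ^ (-(2⁻¹:ℝ))) volume 0 R :=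
      intervalIntegral.intervalIntegrable_rpow' (by norm_num)
    have i2 : IntervalIntegrable (fun p : ℝ => p ^ ((2⁻¹:ℝ))) volume 0 R :=
      intervalIntegral.intervalIntegrable_rpow' (by norm_num)
    have := (i1.add i2)
    rw [intervalIntegrable_iff_integrableOn_Ioc_of_le hR0] at this
    exact this.mul_const M
  set C1 : ℝ := ∫ p in Set.Ioc 0 R, (p ^ (-(2⁻¹:ℝ)) + p ^ (2⁻¹:ℝ)) * M with hC1
  have hbound1 : ∀ᶠ ε in l, ‖∫ p in (0:ℝ)..R, ((p ^ ε : ℝ) : ℂ) * ψ p‖ ≤ C1 := by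
    have hsmall : ∀ᶠ ε : ℝ in l, |ε| ≤ 2⁻¹ := by
      refine Eventually.filter_mono nhdsWithin_le_nhds ?_
      have := eventually_abs_sub_lt (0:ℝ) (by norm_num : (0:ℝ) < 2⁻¹)
      filter_upwards [this] with ε hε
      rw [sub_zero] at hε
      exact hε.le
    filter_upwards [hsmall] with ε hε
    rw [intervalIntegral.integral_of_le hR0]
    calc ‖∫ p in Set.Ioc 0 R, ((p ^ ε : ℝ) : ℂ) * ψ p‖
        ≤ ∫ p in Set.Ioc 0 R, ‖((p ^ ε : ℝ) : ℂ) * ψ p‖ := norm_integral_le_integral_norm _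
      _ ≤ C1 := by
          refine integral_mono_of_nonneg (Eventually.of_forall fun p => norm_nonneg _)
            hg1int ?_
          filter_upwards [ae_restrict_mem measurableSet_Ioc] with p hp
          have hp0 : (0:ℝ) < p := hp.1
          rw [norm_mul, Complex.norm_real, Real.norm_eq_abs,
            _root_.abs_of_nonneg (Real.rpow_nonneg hp0.le ε)]
          exact mul_le_mul (rpow_le_add_rpow hp0 hε) (hM p ⟨hp0.le, hp.2⟩)
            (norm_nonneg _) (by positivity)
  have hC10 : 0 ≤ C1 := by
    refine setIntegral_nonneg measurableSet_Ioc fun p hp => ?_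
    have hp0 : (0:ℝ) < p := hp.1
    positivity
  have htendI1 : Tendsto (fun ε : ℝ =>
      (ε : ℂ) * ∫ p in (0:ℝ)..R, ((p ^ ε : ℝ) : ℂ) * ψ p) l (nhds 0) := by
    refine squeeze_zero_norm' (a := fun ε : ℝ => |ε| * C1) ?_ ?_
    · filter_upwards [hbound1] with ε h
      rw [norm_mul, Complex.norm_real, Real.norm_eq_abs]
      exact mul_le_mul_of_nonneg_left h (abs_nonneg ε)
    · have : Tendsto (fun ε : ℝ => |ε| * C1) (nhds 0) (nhds (|(0:ℝ)| * C1)) :=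
        ((_root_.continuous_abs.tendsto (0:ℝ)).mul_const C1)
      simp only [abs_zero, zero_mul] at this
      exact this.mono_left nhdsWithin_le_nhds
  -- tail integral term
  have hint1 := hint R hR (-(k:ℝ) - 1)
  have hint2 := hint R hR (-(k:ℝ) + 1)
  have hg2int : IntegrableOn (fun p : ℝ =>
      p ^ ((-(k:ℝ) - 1) - 1) * ‖φ p‖
        + p ^ ((-(k:ℝ) + 1) - 1) * ‖φ p‖) (Set.Ioi R) := hint1.add hint2
  set C2 : ℝ := ∫ p in Set.Ioi R, (p ^ ((-(k:ℝ) - 1) - 1) * ‖φ p‖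
      + p ^ ((-(k:ℝ) + 1) - 1) * ‖φ p‖) with hC2
  have hexp : ∀ p : ℝ, 0 < p → ∀ ε : ℝ, |ε| ≤ 1 →
      p ^ (-(k:ℝ) - 1 + ε) ≤ p ^ ((-(k:ℝ) - 1) - 1) + p ^ ((-(k:ℝ) + 1) - 1) := by
    intro p hp ε hε
    rw [Real.rpow_add hp]
    calc p ^ (-(k:ℝ) - 1) * p ^ ε
        ≤ p ^ (-(k:ℝ) - 1) * (p ^ (-(1:ℝ)) + p ^ (1:ℝ)) :=
          mul_le_mul_of_nonneg_left (rpow_le_add_rpow hp hε) (Real.rpow_nonneg hp.le _)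
      _ = p ^ ((-(k:ℝ) - 1) - 1) + p ^ ((-(k:ℝ) + 1) - 1) := by
          rw [mul_add, ← Real.rpow_add hp, ← Real.rpow_add hp,
            show (-(k:ℝ) - 1 + -1) = (-(k:ℝ) - 1 - 1) by ring,
            show (-(k:ℝ) - 1 + 1) = (-(k:ℝ) + 1 - 1) by ring]
  have hbound2 : ∀ᶠ ε in l,
      ‖∫ p in Set.Ioi R, ((p ^ (-(k:ℝ) - 1 + ε) : ℝ) : ℂ) * φ p‖ ≤ C2 := by
    have hsmall : ∀ᶠ ε : ℝ in l, |ε| ≤ 1 := by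
      refine Eventually.filter_mono nhdsWithin_le_nhds ?_
      have := eventually_abs_sub_lt (0:ℝ) (by norm_num : (0:ℝ) < 1)
      filter_upwards [this] with ε hε
      rw [sub_zero] at hε
      exact hε.le
    filter_upwards [hsmall] with ε hε
    calc ‖∫ p in Set.Ioi R, ((p ^ (-(k:ℝ) - 1 + ε) : ℝ) : ℂ) * φ p‖
        ≤ ∫ p in Set.Ioi R, ‖((p ^ (-(k:ℝ) - 1 + ε) : ℝ) : ℂ) * φ p‖ :=
          norm_integral_le_integral_norm _
      _ ≤ C2 := by
          refine integral_mono_of_nonneg (Eventually.of_forall fun p => norm_nonneg _)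
            hg2int ?_
          filter_upwards [ae_restrict_mem measurableSet_Ioi] with p hp
          have hp0 : (0:ℝ) < p := lt_trans hR hp
          rw [norm_mul, Complex.norm_real, Real.norm_eq_abs,
            _root_.abs_of_nonneg (Real.rpow_nonneg hp0.le _), ← add_mul]
          exact mul_le_mul_of_nonneg_right (hexp p hp0 ε hε) (norm_nonneg _)
  have htendI2 : Tendsto (fun ε : ℝ =>
      (ε : ℂ) * ∫ p in Set.Ioi R, ((p ^ (-(k:ℝ) - 1 + ε) : ℝ) : ℂ) * φ p) l (nhds 0) := by
    refine squeeze_zero_norm' (a := fun ε : ℝ => |ε| * C2) ?_ ?_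
    · filter_upwards [hbound2] with ε h
      rw [norm_mul, Complex.norm_real, Real.norm_eq_abs]
      exact mul_le_mul_of_nonneg_left h (abs_nonneg ε)
    · have : Tendsto (fun ε : ℝ => |ε| * C2) (nhds 0) (nhds (|(0:ℝ)| * C2)) :=
        ((_root_.continuous_abs.tendsto (0:ℝ)).mul_const C2)
      simp only [abs_zero, zero_mul] at this
      exact this.mono_left nhdsWithin_le_nhds
  -- combine
  have hfinal := hsum.add (htendI1.add htendI2)
  simp only [add_zero] at hfinal
  refine hfinal.congr fun ε => ?_
  ring
end

section
/- For a ∈ ℂ with Re a > -1/2 and Re y > 0, as y → +∞ along the positive real axis, e^{y/4} y^{1/4 + a/2} u_-(a,y) → 1, where u_-(a,y) = (1/Γ(1/4 + a/2)) e^{-y/4} ∫₀^∞ e^{-py} p^{a/2 - 3/4}(1+2p)^{-a/2-3/4} dp. -/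
open Complex Filter MeasureTheory

/-- The Laplace-integral solution `u₋(a,y)`. -/
noncomputable def uminus (a y : ℂ) : ℂ :=
  (Complex.Gamma (1 / 4 + a / 2))⁻¹ * Complex.exp (-y / 4) *
    ∫ p in Set.Ioi (0 : ℝ),
      Complex.exp (-(p : ℂ) * y) * (p : ℂ) ^ (a / 2 - 3 / 4) *
        (1 + 2 * (p : ℂ)) ^ (-a / 2 - 3 / 4)

/-- Watson's lemma, leading order: for `Re a > -1/2`, as `y → +∞` along the positive
real axis, `e^{y/4} y^{1/4 + a/2} u₋(a,y) → 1`. -/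
theorem uminus_asymptotics (a : ℂ) (ha : (-1 : ℝ) / 2 < a.re) :
    Tendsto
      (fun t : ℝ =>
        Complex.exp ((t : ℂ) / 4) * (t : ℂ) ^ ((1 : ℂ) / 4 + a / 2) * uminus a (t : ℂ))
      atTop (nhds 1) := by
  set c : ℂ := a / 2 - 3 / 4 with hc
  set d : ℂ := -a / 2 - 3 / 4 with hd
  have hcre : c.re = a.re / 2 - 3 / 4 := by
    simp [hc, Complex.sub_re, Complex.div_re, Complex.normSq_apply]
  have hdre : d.re = -a.re / 2 - 3 / 4 := by
    simp [hd, Complex.sub_re, Complex.div_re, Complex.neg_re, Complex.normSq_apply]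
  have hre : 0 < ((1 : ℂ) / 4 + a / 2).re := by
    have : ((1 : ℂ) / 4 + a / 2).re = 1 / 4 + a.re / 2 := by
      simp [Complex.add_re, Complex.div_re, Complex.normSq_apply]
    rw [this]; linarith
  have hΓ : Complex.Gamma (1 / 4 + a / 2) ≠ 0 := Complex.Gamma_ne_zero_of_re_pos hre
  set J : ℝ → ℂ := fun t => ∫ s in Set.Ioi (0 : ℝ),
      Complex.exp (-(s : ℂ)) * (s : ℂ) ^ c * (1 + 2 * (s : ℂ) * (t : ℂ)⁻¹) ^ d with hJdef
  have hJ : Tendsto J atTop (nhds (Complex.Gamma (1 / 4 + a / 2))) := by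
    rw [Complex.Gamma_eq_integral hre, Complex.GammaIntegral, hJdef]
    refine tendsto_integral_filter_of_dominated_convergence
      (fun s : ℝ => Real.exp (-s) * s ^ (a.re / 2 - 3 / 4)) ?_ ?_ ?_ ?_
    · -- measurability
      filter_upwards [eventually_gt_atTop (0 : ℝ)] with t ht
      refine ContinuousOn.aestronglyMeasurable ?_ measurableSet_Ioi
      intro s hs
      simp only [Set.mem_Ioi] at hs
      refine ContinuousWithinAt.mul (ContinuousWithinAt.mul ?_ ?_) ?_
      · exact (Complex.continuous_exp.comp Complex.continuous_ofReal.neg).continuousWithinAt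
      · exact (((continuousAt_cpow_const (Complex.ofReal_mem_slitPlane.2 hs)).comp
          Complex.continuous_ofReal.continuousAt)).continuousWithinAt
      · have hbase : Continuous fun s : ℝ => (1 : ℂ) + 2 * (s : ℂ) * (t : ℂ)⁻¹ := by
          continuity
        have hmem : ((1 : ℂ) + 2 * (s : ℂ) * (t : ℂ)⁻¹) ∈ Complex.slitPlane := by
          refine Or.inl ?_
          have : ((1 : ℂ) + 2 * (s : ℂ) * (t : ℂ)⁻¹).re = 1 + 2 * s * t⁻¹ := by
            simp
          rw [this]
          have : 0 ≤ 2 * s * t⁻¹ := by positivity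
          linarith
        have hca := ContinuousAt.comp (g := fun z : ℂ => z ^ d)
          (f := fun s : ℝ => (1 : ℂ) + 2 * (s : ℂ) * (t : ℂ)⁻¹) (x := s)
          (continuousAt_cpow_const hmem) hbase.continuousAt
        exact hca.continuousWithinAt
    · -- bound
      filter_upwards [eventually_gt_atTop (0 : ℝ)] with t ht
      rw [ae_restrict_iff' measurableSet_Ioi]
      filter_upwards with s hs
      simp only [Set.mem_Ioi] at hs
      have hb0 : (0 : ℝ) ≤ 2 * s * t⁻¹ := by positivity
      have h3 : ((1 : ℂ) + 2 * (s : ℂ) * (t : ℂ)⁻¹) = (((1 + 2 * s * t⁻¹ : ℝ)) : ℂ) := by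
        push_cast; ring
      rw [norm_mul, norm_mul,
        Complex.norm_exp, h3, Complex.norm_cpow_eq_rpow_re_of_pos hs,
        Complex.norm_cpow_eq_rpow_re_of_pos (by linarith : (0:ℝ) < 1 + 2 * s * t⁻¹)]
      have h4 : ((-(s : ℂ)).re) = -s := by simp
      rw [h4, hcre]
      have h5 : (1 + 2 * s * t⁻¹) ^ d.re ≤ 1 :=
        Real.rpow_le_one_of_one_le_of_nonpos (by linarith) (by rw [hdre]; linarith)
      have h6 : 0 ≤ Real.exp (-s) * s ^ (a.re / 2 - 3 / 4) := by positivity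
      calc Real.exp (-s) * s ^ (a.re / 2 - 3 / 4) * (1 + 2 * s * t⁻¹) ^ d.re
          ≤ Real.exp (-s) * s ^ (a.re / 2 - 3 / 4) * 1 := by
            exact mul_le_mul_of_nonneg_left h5 h6
        _ = Real.exp (-s) * s ^ (a.re / 2 - 3 / 4) := by ring
    · -- integrability of the bound
      have h := Real.GammaIntegral_convergent (s := a.re / 2 + 1 / 4) (by linarith)
      rw [show a.re / 2 + 1 / 4 - 1 = a.re / 2 - 3 / 4 by ring] at h
      exact h
    · -- pointwise convergence
      rw [ae_restrict_iff' measurableSet_Ioi]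
      filter_upwards with s hs
      simp only [Set.mem_Ioi] at hs
      have l1 : Tendsto (fun t : ℝ => ((t : ℂ))⁻¹) atTop (nhds 0) := by
        have h0 : Tendsto (fun t : ℝ => t⁻¹) atTop (nhds (0 : ℝ)) := tendsto_inv_atTop_zero
        have := (Complex.continuous_ofReal.tendsto (0 : ℝ)).comp h0
        simpa [Function.comp_def, Complex.ofReal_inv] using this
      have l2 : Tendsto (fun t : ℝ => (1 : ℂ) + 2 * (s : ℂ) * (t : ℂ)⁻¹) atTop (nhds 1) := by
        have h2 : Tendsto (fun t : ℝ => (1 : ℂ) + 2 * (s : ℂ) * (t : ℂ)⁻¹) atTop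
            (nhds (1 + 2 * (s : ℂ) * 0)) :=
          (tendsto_const_nhds (x := (1 : ℂ))).add
            ((tendsto_const_nhds (x := 2 * (s : ℂ))).mul l1)
        simpa using h2
      have l3 : Tendsto (fun t : ℝ => ((1 : ℂ) + 2 * (s : ℂ) * (t : ℂ)⁻¹) ^ d) atTop
          (nhds 1) := by
        have hcont : ContinuousAt (fun z : ℂ => z ^ d) 1 :=
          continuousAt_cpow_const (Or.inl (by simp))
        have := hcont.tendsto.comp l2
        simpa [Function.comp_def] using this
      have := (tendsto_const_nhds (x := Complex.exp (-(s : ℂ)) * (s : ℂ) ^ c)).mul l3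
      rw [mul_one] at this
      have heq : ((Real.exp (-s) : ℝ) : ℂ) * (s : ℂ) ^ ((1 : ℂ) / 4 + a / 2 - 1)
          = Complex.exp (-(s : ℂ)) * (s : ℂ) ^ c := by
        rw [show ((1 : ℂ) / 4 + a / 2 - 1) = c by rw [hc]; ring, Complex.ofReal_exp]
        push_cast
        ring
      rw [heq]
      exact this

  have key : ∀ t : ℝ, 0 < t →
      Complex.exp ((t : ℂ) / 4) * (t : ℂ) ^ ((1 : ℂ) / 4 + a / 2) * uminus a (t : ℂ)
        = (Complex.Gamma (1 / 4 + a / 2))⁻¹ * J t := by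
    intro t ht
    have ht0 : (t : ℂ) ≠ 0 := Complex.ofReal_ne_zero.2 ht.ne'
    have hcv := integral_comp_mul_left_Ioi
      (fun p : ℝ => Complex.exp (-(p : ℂ) * t) * (p : ℂ) ^ c * (1 + 2 * (p : ℂ)) ^ d) 0
      (inv_pos.2 ht)
    rw [mul_zero, inv_inv] at hcv
    have h2 : (∫ x in Set.Ioi (0 : ℝ),
        (fun p : ℝ => Complex.exp (-(p : ℂ) * t) * (p : ℂ) ^ c * (1 + 2 * (p : ℂ)) ^ d)
          (t⁻¹ * x)) = ((t : ℂ)⁻¹) ^ c * J t := by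
      rw [hJdef, ← integral_const_mul]
      refine setIntegral_congr_fun measurableSet_Ioi fun s hs => ?_
      simp only [Set.mem_Ioi] at hs
      have e1 : -(((t⁻¹ * s : ℝ) : ℂ)) * t = -(s : ℂ) := by
        push_cast
        field_simp
      have e2 : (((t⁻¹ * s : ℝ) : ℂ)) = ((t⁻¹ : ℝ) : ℂ) * ((s : ℝ) : ℂ) := by push_cast; ring
      have e3 : ((t⁻¹ * s : ℝ) : ℂ) ^ c = ((t⁻¹ : ℝ) : ℂ) ^ c * (s : ℂ) ^ c := by
        rw [e2]
        exact Complex.mul_cpow_ofReal_nonneg (inv_pos.2 ht).le hs.le c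
      have e4 : (1 + 2 * ((t⁻¹ * s : ℝ) : ℂ)) = 1 + 2 * (s : ℂ) * (t : ℂ)⁻¹ := by
        push_cast; ring
      simp only [e1, e3, e4]
      push_cast
      ring
    rw [h2] at hcv
    have hint : (∫ p in Set.Ioi (0 : ℝ),
        Complex.exp (-(p : ℂ) * t) * (p : ℂ) ^ c * (1 + 2 * (p : ℂ)) ^ d)
        = (t : ℂ)⁻¹ * (((t : ℂ) ^ c)⁻¹ * J t) := by
      have harg : Complex.arg (t : ℂ) ≠ Real.pi := by
        rw [Complex.arg_ofReal_of_nonneg ht.le]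
        exact (Real.pi_ne_zero).symm
      have hinv : ((t : ℂ)⁻¹) ^ c = ((t : ℂ) ^ c)⁻¹ := Complex.inv_cpow _ _ harg
      have := hcv
      rw [hinv] at this
      -- this : ((t:ℂ)^c)⁻¹ * J t = t • ∫ f   (check direction)
      have ht' : (t : ℝ) ≠ 0 := ht.ne'
      rw [this, Complex.real_smul, ← mul_assoc, inv_mul_cancel₀ ht0, one_mul]
    have he : (t : ℂ) ^ ((1 : ℂ) / 4 + a / 2) = (t : ℂ) * (t : ℂ) ^ c := by
      rw [show (1 : ℂ) / 4 + a / 2 = 1 + c by rw [hc]; ring, Complex.cpow_add _ _ ht0,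
        Complex.cpow_one]
    have hexp : Complex.exp ((t : ℂ) / 4) * Complex.exp (-(t : ℂ) / 4) = 1 := by
      rw [← Complex.exp_add, show (t : ℂ) / 4 + -(t : ℂ) / 4 = 0 by ring, Complex.exp_zero]
    have htc : (t : ℂ) ^ c ≠ 0 := by
      simp [Complex.cpow_eq_zero_iff, ht0]
    rw [uminus, hint, he]
    calc Complex.exp ((t : ℂ) / 4) * ((t : ℂ) * (t : ℂ) ^ c) *
          ((Complex.Gamma (1 / 4 + a / 2))⁻¹ * Complex.exp (-(t : ℂ) / 4) *
            ((t : ℂ)⁻¹ * (((t : ℂ) ^ c)⁻¹ * J t)))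
        = (Complex.exp ((t : ℂ) / 4) * Complex.exp (-(t : ℂ) / 4)) *
            (((t : ℂ) * (t : ℂ)⁻¹) * (((t : ℂ) ^ c) * ((t : ℂ) ^ c)⁻¹)) *
            ((Complex.Gamma (1 / 4 + a / 2))⁻¹ * J t) := by ring
      _ = (Complex.Gamma (1 / 4 + a / 2))⁻¹ * J t := by
          rw [hexp, mul_inv_cancel₀ ht0, mul_inv_cancel₀ htc]
          ring

  have hmain : Tendsto (fun t : ℝ => (Complex.Gamma (1 / 4 + a / 2))⁻¹ * J t) atTop
      (nhds ((Complex.Gamma (1 / 4 + a / 2))⁻¹ * Complex.Gamma (1 / 4 + a / 2))) :=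
    tendsto_const_nhds.mul hJ
  rw [inv_mul_cancel₀ hΓ] at hmain
  refine hmain.congr' ?_
  filter_upwards [eventually_gt_atTop (0 : ℝ)] with t ht
  exact (key t ht).symm
end

section
/- For all a ∈ ℂ (avoiding poles), ((1 + i e^{πa}) · 2^{ia} · e^{-iπ/4} · Γ(1/4 + ia/2)) / Γ(1/4 - ia/2) = √(2π) e^{πa/2} / Γ(1/2 - ia). -/
open Complex

lemma exp_I_pi_div_two : Complex.exp (Complex.I * (Real.pi : ℂ) / 2) = Complex.I := by
  have h : (Complex.I * (Real.pi : ℂ) / 2) = ((Real.pi / 2 : ℝ) : ℂ) * Complex.I := by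
    push_cast; ring
  rw [h, Complex.exp_mul_I, ← Complex.ofReal_cos, ← Complex.ofReal_sin,
    Real.cos_pi_div_two, Real.sin_pi_div_two]
  simp

/-- The Gamma-function identity giving the connection coefficient in
`E₋(a,-x) = i e^{πa} E₋(a,x) + (√(2π)/Γ(1/2 - ia)) e^{πa/2} E₊(a,x)`:
`((1 + i e^{πa}) 2^{ia} e^{-iπ/4} Γ(1/4 + ia/2)) / Γ(1/4 - ia/2)
  = √(2π) e^{πa/2} / Γ(1/2 - ia)`, for `a` avoiding the poles of the Gamma factors. -/
theorem connection_coefficient_identity_E (a : ℂ)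
    (h1 : ∀ n : ℕ, 1 / 4 + Complex.I * a / 2 ≠ -(n : ℂ))
    (h2 : ∀ n : ℕ, 1 / 4 - Complex.I * a / 2 ≠ -(n : ℂ))
    (h3 : ∀ n : ℕ, 1 / 2 - Complex.I * a ≠ -(n : ℂ)) :
    ((1 + Complex.I * Complex.exp ((Real.pi : ℂ) * a)) * (2 : ℂ) ^ (Complex.I * a) *
          Complex.exp (-Complex.I * (Real.pi : ℂ) / 4) *
          Complex.Gamma (1 / 4 + Complex.I * a / 2)) /
        Complex.Gamma (1 / 4 - Complex.I * a / 2)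
      = ((Real.sqrt (2 * Real.pi) : ℝ) : ℂ) * Complex.exp ((Real.pi : ℂ) * a / 2) /
          Complex.Gamma (1 / 2 - Complex.I * a) := by
  have hG1 : Complex.Gamma (1/4 + Complex.I*a/2) ≠ 0 := Complex.Gamma_ne_zero h1
  have hG2 : Complex.Gamma (1/4 - Complex.I*a/2) ≠ 0 := Complex.Gamma_ne_zero h2
  have hG4 : Complex.Gamma (1/2 - Complex.I*a) ≠ 0 := Complex.Gamma_ne_zero h3
  have hG3 : Complex.Gamma (3/4 - Complex.I*a/2) ≠ 0 := by
    refine Complex.Gamma_ne_zero (fun n hn => h3 (2*n+1) ?_)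
    push_cast
    linear_combination 2 * hn
  have dup := Complex.Gamma_mul_Gamma_add_half (1/4 - Complex.I*a/2)
  rw [show (1/4 - Complex.I*a/2 + 1/2 : ℂ) = 3/4 - Complex.I*a/2 by ring,
      show (2*(1/4 - Complex.I*a/2) : ℂ) = 1/2 - Complex.I*a by ring,
      show ((1:ℂ) - (1/2 - Complex.I*a) : ℂ) = 1/2 + Complex.I*a by ring] at dup
  have refle := Complex.Gamma_mul_Gamma_one_sub (1/4 + Complex.I*a/2)
  rw [show ((1:ℂ) - (1/4 + Complex.I*a/2) : ℂ) = 3/4 - Complex.I*a/2 by ring] at refle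
  have hsin : Complex.sin ((Real.pi:ℂ) * (1/4 + Complex.I*a/2)) ≠ 0 := by
    intro h
    rw [h, div_zero] at refle
    exact mul_ne_zero hG1 hG3 refle
  -- auxiliary exponential / power facts
  have hpow : (2:ℂ) ^ ((1:ℂ)/2 + Complex.I*a)
      = ((Real.sqrt 2 : ℝ) : ℂ) * (2:ℂ)^(Complex.I*a) := by
    rw [Complex.cpow_add _ _ two_ne_zero]
    congr 1
    rw [show ((1:ℂ)/2) = ((1/2 : ℝ) : ℂ) by norm_num, show (2:ℂ) = ((2:ℝ):ℂ) by norm_num,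
        ← Complex.ofReal_cpow (by norm_num : (0:ℝ) ≤ 2), ← Real.sqrt_eq_rpow]
  have hsqrt : ((Real.sqrt (2*Real.pi) : ℝ) : ℂ)
      = ((Real.sqrt 2 : ℝ) : ℂ) * ((Real.sqrt Real.pi : ℝ) : ℂ) := by
    rw [Real.sqrt_mul (by norm_num : (0:ℝ) ≤ 2)]
    push_cast; ring
  have s2 : ((Real.sqrt 2 : ℝ) : ℂ) * ((Real.sqrt 2 : ℝ) : ℂ) = 2 := by
    rw [← Complex.ofReal_mul, Real.mul_self_sqrt (by norm_num : (0:ℝ) ≤ 2)]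
    norm_num
  have sp : ((Real.sqrt Real.pi : ℝ) : ℂ) * ((Real.sqrt Real.pi : ℝ) : ℂ) = (Real.pi : ℂ) := by
    rw [← Complex.ofReal_mul, Real.mul_self_sqrt Real.pi_pos.le]
  have fEa : Complex.exp ((Real.pi:ℂ)*a)
      = Complex.exp ((Real.pi:ℂ)*a/2) * Complex.exp ((Real.pi:ℂ)*a/2) := by
    rw [← Complex.exp_add]; congr 1; ring
  have fX : Complex.exp (-(((Real.pi:ℂ) * (1/4 + Complex.I*a/2))) * Complex.I)
      = Complex.exp (-Complex.I*(Real.pi:ℂ)/4) * Complex.exp ((Real.pi:ℂ)*a/2) := by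
    rw [← Complex.exp_add]; congr 1
    linear_combination (-(Real.pi:ℂ)*a/2) * Complex.I_mul_I
  have fY : Complex.exp (((Real.pi:ℂ) * (1/4 + Complex.I*a/2)) * Complex.I)
        * Complex.exp ((Real.pi:ℂ)*a/2)
      = Complex.I * Complex.exp (-Complex.I*(Real.pi:ℂ)/4) := by
    have h24 : Complex.I * Complex.exp (-Complex.I*(Real.pi:ℂ)/4)
        = Complex.exp (Complex.I*(Real.pi:ℂ)/4) :=
      calc Complex.I * Complex.exp (-Complex.I*(Real.pi:ℂ)/4)
          = Complex.exp (Complex.I*(Real.pi:ℂ)/2) * Complex.exp (-Complex.I*(Real.pi:ℂ)/4) := by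
            rw [exp_I_pi_div_two]
        _ = Complex.exp (Complex.I*(Real.pi:ℂ)/4) := by rw [← Complex.exp_add]; congr 1; ring
    rw [h24, ← Complex.exp_add]
    congr 1
    linear_combination ((Real.pi:ℂ)*a/2) * Complex.I_mul_I
  -- the key scalar identity
  have key : ((1 + Complex.I * Complex.exp ((Real.pi:ℂ)*a)) * (2:ℂ)^(Complex.I*a) *
        Complex.exp (-Complex.I*(Real.pi:ℂ)/4)) *
        ((Real.pi:ℂ) / Complex.sin ((Real.pi:ℂ) * (1/4 + Complex.I*a/2)))
      = ((Real.sqrt (2*Real.pi) : ℝ) : ℂ) * Complex.exp ((Real.pi:ℂ)*a/2) *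
        ((2:ℂ)^((1:ℂ)/2 + Complex.I*a) * ((Real.sqrt Real.pi : ℝ) : ℂ)) := by
    rw [mul_div_assoc', div_eq_iff hsin, hpow, hsqrt, fEa, Complex.sin, fX]
    have hI : Complex.I * Complex.I = -1 := Complex.I_mul_I
    set E1 := Complex.exp ((Real.pi:ℂ)*a/2) with hE1
    set E4 := Complex.exp (-Complex.I*(Real.pi:ℂ)/4) with hE4
    set Y := Complex.exp (((Real.pi:ℂ) * (1/4 + Complex.I*a/2)) * Complex.I) with hY
    linear_combination
      (-(((Real.sqrt Real.pi : ℝ):ℂ) * ((Real.sqrt Real.pi : ℝ):ℂ)) * E1 * (2:ℂ)^(Complex.I*a) *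
        (E4*E1 - Y) * Complex.I / 2) * s2
      + (-(E1 * (2:ℂ)^(Complex.I*a) * (E4*E1 - Y) * Complex.I)) * sp
      + ((Real.pi:ℂ) * (2:ℂ)^(Complex.I*a) * Complex.I) * fY
      + ((Real.pi:ℂ) * (2:ℂ)^(Complex.I*a) * E4) * hI
  rw [div_eq_div_iff hG2 hG4]
  refine mul_right_cancel₀ hG3 ?_
  linear_combination ((1 + Complex.I * Complex.exp ((Real.pi:ℂ)*a)) * (2:ℂ)^(Complex.I*a) *
      Complex.exp (-Complex.I*(Real.pi:ℂ)/4) * Complex.Gamma (1/2 - Complex.I*a)) * refle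
    - (((Real.sqrt (2*Real.pi) : ℝ) : ℂ) * Complex.exp ((Real.pi:ℂ)*a/2)) * dup
    + Complex.Gamma (1/2 - Complex.I*a) * key
end
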